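/- Let (T₀,T₁) be a pair of nonzero complex polynomials and let (y₀,y₁) lie in a population of critical points corresponding to (T₀,T₁). Let f₀, f₁ be nonzero rational functions over ℂ such that f₀·y₀, f₁·y₁, T₀·f₀²/f₁², and T₁·f₁²/f₀² are all polynomials. If the pair (f₀·y₀, f₁·y₁) is super-fertile with respect to (T₀·f₀²/f₁², T₁·f₁²/f₀²), then f₀ and f₁ are polynomials. -/

import Mathlib

open Polynomial

noncomputable section

/-- The Wronskian of two polynomials: `Wr(f,g) = f·g′ − f′·g`. -/
def pWr (f g : ℂ[X]) : ℂ[X] := f * derivative g - derivative f * g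

/-- A pair `y = (y₀,y₁)` of nonzero polynomials is fertile with respect to a pair
`T = (T₀,T₁)` if there exist `ỹ₀, ỹ₁` with `Wr(y₀,ỹ₀) = T₀·y₁²` and `Wr(y₁,ỹ₁) = T₁·y₀²`. -/
def Fertile (T y : ℂ[X] × ℂ[X]) : Prop :=
  y.1 ≠ 0 ∧ y.2 ≠ 0 ∧
  ∃ ty0 ty1 : ℂ[X], pWr y.1 ty0 = T.1 * y.2 ^ 2 ∧ pWr y.2 ty1 = T.2 * y.1 ^ 2

/-- Reproduction in direction 0: replace `(y₀,y₁)` by `(ỹ₀,y₁)` with `Wr(y₀,ỹ₀) = T₀·y₁²`. -/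
def Reprod0 (T y z : ℂ[X] × ℂ[X]) : Prop :=
  z.2 = y.2 ∧ pWr y.1 z.1 = T.1 * y.2 ^ 2

/-- Reproduction in direction 1: replace `(y₀,y₁)` by `(y₀,ỹ₁)` with `Wr(y₁,ỹ₁) = T₁·y₀²`. -/
def Reprod1 (T y z : ℂ[X] × ℂ[X]) : Prop :=
  z.1 = y.1 ∧ pWr y.2 z.2 = T.2 * y.1 ^ 2

/-- Reproduction (in either direction). -/
def Reprod (T y z : ℂ[X] × ℂ[X]) : Prop := Reprod0 T y z ∨ Reprod1 T y z

/-- A pair is super-fertile w.r.t. `T` if every pair obtained from it by a finite (possibly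
empty) sequence of reproductions w.r.t. `T` is fertile w.r.t. `T`. -/
def SuperFertile (T y : ℂ[X] × ℂ[X]) : Prop :=
  ∀ z, Relation.ReflTransGen (Reprod T) y z → Fertile T z

/-- A pair `(y₀,y₁)` is generic w.r.t. `(T₀,T₁)`: `y₀,y₁` squarefree, coprime to each other,
and `yᵢ` coprime with `Tᵢ`. -/
def Generic (T y : ℂ[X] × ℂ[X]) : Prop :=
  Squarefree y.1 ∧ Squarefree y.2 ∧ IsCoprime y.1 y.2 ∧
    IsCoprime y.1 T.1 ∧ IsCoprime y.2 T.2

/-- A pair represents a critical point w.r.t. `T` if it is generic and fertile w.r.t. `T`. -/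
def IsCriticalPt (T y : ℂ[X] × ℂ[X]) : Prop := Generic T y ∧ Fertile T y

/-- A pair lies in a population of critical points corresponding to `T` if it is obtained by a
finite (possibly empty) sequence of reproductions from a pair representing a critical point. -/
def InPopulation (T y : ℂ[X] × ℂ[X]) : Prop :=
  ∃ y₀, IsCriticalPt T y₀ ∧ Relation.ReflTransGen (Reprod T) y₀ y

namespace SFAux


lemma pWr_zero_left (R : ℂ[X]) : pWr 0 R = 0 := by simp [pWr]

lemma pWr_zero_right (P : ℂ[X]) : pWr P 0 = 0 := by simp [pWr]

lemma pWr_anti (P R : ℂ[X]) : pWr P R = -pWr R P := by simp [pWr]; ring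

lemma pWr_mul_mul (f u v : ℂ[X]) : pWr (f*u) (f*v) = f^2 * pWr u v := by
  simp only [pWr, derivative_mul]; ring

lemma pWr_sub_C_mul (P R : ℂ[X]) (c : ℂ) : pWr P (R - C c * P) = pWr P R := by
  simp only [pWr, derivative_sub, derivative_mul, derivative_C]; ring

lemma pWr_pow_mul (t : ℂ) (k : ℕ) (u v : ℂ[X]) :
    pWr ((X - C t)^(k+1) * u) v
      = (X - C t)^k * ((X - C t) * pWr u v - (C ((k:ℂ)+1)) * (u * v)) := by
  simp only [pWr, derivative_mul, derivative_pow, derivative_sub, derivative_X, derivative_C,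
    Nat.add_sub_cancel, Nat.cast_add, Nat.cast_one, map_add, map_one, sub_zero, mul_one]
  ring

lemma exists_decomp (P : ℂ[X]) (hP : P ≠ 0) (a : ℂ) :
    ∃ u : ℂ[X], P = (X - C a) ^ (rootMultiplicity a P) * u ∧ u.eval a ≠ 0 := by
  obtain ⟨u, hu⟩ := pow_rootMultiplicity_dvd P a
  have hu0 : u ≠ 0 := by rintro rfl; simp at hu; exact hP hu
  refine ⟨u, hu, ?_⟩
  have hmul : ((X - C a) ^ (rootMultiplicity a P)) * u ≠ 0 := hu ▸ hP
  have h1 : rootMultiplicity a P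
      = rootMultiplicity a ((X - C a) ^ (rootMultiplicity a P)) + rootMultiplicity a u := by
    conv_lhs => rw [hu]
    exact rootMultiplicity_mul hmul
  rw [rootMultiplicity_X_sub_C_pow] at h1
  have h2 : rootMultiplicity a u = 0 := by omega
  intro hev
  exact hu0 ((rootMultiplicity_eq_zero_iff.1 h2) hev)

lemma rm_neg (a : ℂ) (q : ℂ[X]) : rootMultiplicity a (-q) = rootMultiplicity a q := by
  by_cases hq : q = 0
  · simp [hq]
  · have hCq : C (-1 : ℂ) * q ≠ 0 := by
      refine mul_ne_zero ?_ hq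
      simp
    have h1 : -q = C (-1 : ℂ) * q := by
      simp
    rw [h1, rootMultiplicity_mul hCq, rootMultiplicity_C, zero_add]

/-- Core exact valuation lemma when `rm R < rm P`. -/
lemma rm_pWr_core (a : ℂ) {P R : ℂ[X]} (hP : P ≠ 0) (hR : R ≠ 0)
    (hlt : rootMultiplicity a R < rootMultiplicity a P) :
    pWr P R ≠ 0 ∧
      rootMultiplicity a (pWr P R) + 1 = rootMultiplicity a P + rootMultiplicity a R := by
  obtain ⟨u, hu, hua⟩ := exists_decomp P hP a
  obtain ⟨v, hv, hva⟩ := exists_decomp R hR a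
  obtain ⟨p, hp⟩ : ∃ p, rootMultiplicity a P = p := ⟨_, rfl⟩
  obtain ⟨r, hr⟩ : ∃ r, rootMultiplicity a R = r := ⟨_, rfl⟩
  rw [hp] at hu hlt
  rw [hr] at hv hlt
  rw [hp, hr]
  set k := p - r - 1 with hk
  have hpk : p = r + (k+1) := by omega
  have hu' : P = (X - C a)^r * ((X - C a)^(k+1) * u) := by
    rw [hu, hpk, pow_add, mul_assoc]
  set B := (X - C a) * pWr u v - (C ((k:ℂ)+1)) * (u * v) with hB
  have key : pWr P R = (X - C a)^(2*r+k) * B := by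
    calc pWr P R = pWr ((X - C a)^r * ((X - C a)^(k+1) * u)) ((X - C a)^r * v) := by
          rw [← hu', ← hv]
      _ = ((X - C a)^r)^2 * pWr ((X - C a)^(k+1) * u) v := pWr_mul_mul _ _ _
      _ = ((X - C a)^r)^2 * ((X - C a)^k * B) := by rw [pWr_pow_mul]
      _ = (X - C a)^(2*r+k) * B := by rw [← pow_mul]; ring
  have hBa : B.eval a ≠ 0 := by
    have : B.eval a = -(((k:ℂ)+1) * (u.eval a * v.eval a)) := by
      simp [hB]
    rw [this, neg_ne_zero]
    refine mul_ne_zero ?_ (mul_ne_zero hua hva)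
    exact_mod_cast Nat.succ_ne_zero k
  have hB0 : B ≠ 0 := fun h => hBa (by simp [h])
  have hrmB : rootMultiplicity a B = 0 :=
    rootMultiplicity_eq_zero (fun h => hBa h)
  have hXa : (X - C a : ℂ[X]) ≠ 0 := X_sub_C_ne_zero a
  have hne0 : (X - C a : ℂ[X])^(2*r+k) * B ≠ 0 :=
    mul_ne_zero (pow_ne_zero _ hXa) hB0
  refine ⟨key ▸ hne0, ?_⟩
  rw [key, rootMultiplicity_mul hne0, rootMultiplicity_X_sub_C_pow, hrmB]
  omega

lemma rm_pWr (a : ℂ) {P R : ℂ[X]} (hP : P ≠ 0) (hR : R ≠ 0)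
    (hne : rootMultiplicity a P ≠ rootMultiplicity a R) :
    pWr P R ≠ 0 ∧
      rootMultiplicity a (pWr P R) + 1 = rootMultiplicity a P + rootMultiplicity a R := by
  rcases lt_or_gt_of_ne hne with h | h
  · have hc := rm_pWr_core a hR hP h
    constructor
    · rw [pWr_anti]; exact neg_ne_zero.2 hc.1
    · rw [pWr_anti, rm_neg]; omega
  · exact rm_pWr_core a hP hR h

/-- dvd form when equal multiplicities -/
lemma rm_pWr_eq_dvd (a : ℂ) {P R : ℂ[X]} (hP : P ≠ 0) (hR : R ≠ 0)
    (heq : rootMultiplicity a P = rootMultiplicity a R) :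
    (X - C a) ^ (2 * rootMultiplicity a P) ∣ pWr P R := by
  obtain ⟨u, hu, hua⟩ := exists_decomp P hP a
  obtain ⟨v, hv, hva⟩ := exists_decomp R hR a
  rw [← heq] at hv
  obtain ⟨p, hp⟩ : ∃ p, rootMultiplicity a P = p := ⟨_, rfl⟩
  rw [hp] at hu hv ⊢
  exact ⟨pWr u v, by rw [hu, hv, pWr_mul_mul, ← pow_mul, mul_comm p 2]⟩

-- continuation (appended to dev1 content for testing)

lemma master_step (a : ℂ) {P R G : ℂ[X]} (hG : G ≠ 0) (h : pWr P R = G) :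
    ∃ R', pWr P R' = G ∧
      (rootMultiplicity a R' : ℤ)
        = (rootMultiplicity a G : ℤ) + 1 - (rootMultiplicity a P : ℤ) := by
  have hP : P ≠ 0 := by rintro rfl; rw [pWr_zero_left] at h; exact hG h.symm
  have hR : R ≠ 0 := by rintro rfl; rw [pWr_zero_right] at h; exact hG h.symm
  by_cases hre : rootMultiplicity a P = rootMultiplicity a R
  · obtain ⟨u, hu, hua⟩ := exists_decomp P hP a
    obtain ⟨v, hv, hva⟩ := exists_decomp R hR a
    rw [← hre] at hv
    obtain ⟨e, he⟩ : ∃ e, rootMultiplicity a P = e := ⟨_, rfl⟩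
    rw [he] at hu hv
    set c := v.eval a / u.eval a with hc
    set R' := R - C c * P with hR'
    have hW : pWr P R' = G := by rw [hR', pWr_sub_C_mul, h]
    have hR'0 : R' ≠ 0 := by
      intro h0; rw [h0, pWr_zero_right] at hW; exact hG hW.symm
    have hfact : R' = (X - C a)^e * (v - C c * u) := by
      rw [hR', hu, hv]; ring
    have hev : (v - C c * u).eval a = 0 := by
      simp only [eval_sub, eval_mul, eval_C, hc]
      field_simp
      ring
    have hdvd : (X - C a)^(e+1) ∣ R' := by
      obtain ⟨w, hw⟩ := (dvd_iff_isRoot (p := v - C c * u) (a := a)).2 hev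
      exact ⟨w, by rw [hfact, hw, pow_succ]; ring⟩
    have hgt : e + 1 ≤ rootMultiplicity a R' := (le_rootMultiplicity_iff hR'0).2 hdvd
    have hne : rootMultiplicity a P ≠ rootMultiplicity a R' := by omega
    have hL := (rm_pWr a hP hR'0 hne).2
    rw [hW] at hL
    refine ⟨R', hW, by omega⟩
  · have hL := (rm_pWr a hP hR hre).2
    rw [h] at hL
    exact ⟨R, h, by omega⟩

lemma rm_mul_sq (a : ℂ) {A B : ℂ[X]} (hA : A ≠ 0) (hB : B ≠ 0) :
    rootMultiplicity a (A * B^2)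
      = rootMultiplicity a A + (rootMultiplicity a B + rootMultiplicity a B) := by
  rw [pow_two, rootMultiplicity_mul (mul_ne_zero hA (mul_ne_zero hB hB)),
    rootMultiplicity_mul (mul_ne_zero hB hB)]

lemma step_dir0 {S0 S1 p0 p1 P0 P1 : ℂ[X]} (a : ℂ) (hS0 : S0 ≠ 0)
    (hsf : SuperFertile (S0,S1) (p0,p1))
    (hreach : Relation.ReflTransGen (Reprod (S0,S1)) (p0,p1) (P0,P1)) :
    ∃ P0' : ℂ[X], Relation.ReflTransGen (Reprod (S0,S1)) (p0,p1) (P0',P1) ∧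
      (rootMultiplicity a P0' : ℤ)
        = (rootMultiplicity a S0 : ℤ) + 2*(rootMultiplicity a P1 : ℤ) + 1
          - (rootMultiplicity a P0 : ℤ) := by
  obtain ⟨h1, h2, ty0, ty1, e0, e1⟩ := hsf _ hreach
  have h1 : P0 ≠ 0 := h1
  have h2 : P1 ≠ 0 := h2
  have hG : S0 * P1^2 ≠ 0 := mul_ne_zero hS0 (pow_ne_zero _ h2)
  have e0' : pWr P0 ty0 = S0 * P1^2 := e0
  obtain ⟨R', hW, hrm⟩ := master_step a hG e0'
  refine ⟨R', hreach.tail (Or.inl ⟨rfl, hW⟩), ?_⟩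
  have hrmG := rm_mul_sq a hS0 h2
  omega

lemma step_dir1 {S0 S1 p0 p1 P0 P1 : ℂ[X]} (a : ℂ) (hS1 : S1 ≠ 0)
    (hsf : SuperFertile (S0,S1) (p0,p1))
    (hreach : Relation.ReflTransGen (Reprod (S0,S1)) (p0,p1) (P0,P1)) :
    ∃ P1' : ℂ[X], Relation.ReflTransGen (Reprod (S0,S1)) (p0,p1) (P0,P1') ∧
      (rootMultiplicity a P1' : ℤ)
        = (rootMultiplicity a S1 : ℤ) + 2*(rootMultiplicity a P0 : ℤ) + 1
          - (rootMultiplicity a P1 : ℤ) := by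
  obtain ⟨h1, h2, ty0, ty1, e0, e1⟩ := hsf _ hreach
  have h1 : P0 ≠ 0 := h1
  have h2 : P1 ≠ 0 := h2
  have hG : S1 * P0^2 ≠ 0 := mul_ne_zero hS1 (pow_ne_zero _ h1)
  have e1' : pWr P1 ty1 = S1 * P0^2 := e1
  obtain ⟨R', hW, hrm⟩ := master_step a hG e1'
  refine ⟨R', hreach.tail (Or.inr ⟨rfl, hW⟩), ?_⟩
  have hrmG := rm_mul_sq a hS1 h1
  omega

lemma chain_ne_zero {T0 T1 : ℂ[X]} (hT0 : T0 ≠ 0) (hT1 : T1 ≠ 0) {w z : ℂ[X] × ℂ[X]}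
    (h : Relation.ReflTransGen (Reprod (T0,T1)) w z) (h1 : w.1 ≠ 0) (h2 : w.2 ≠ 0) :
    z.1 ≠ 0 ∧ z.2 ≠ 0 := by
  induction h with
  | refl => exact ⟨h1, h2⟩
  | tail hwb hbz ih =>
    rcases hbz with ⟨hz2, heq⟩ | ⟨hz1, heq⟩
    · refine ⟨?_, hz2 ▸ ih.2⟩
      intro h0
      rw [h0, pWr_zero_right] at heq
      exact (mul_ne_zero hT0 (pow_ne_zero 2 ih.2)) heq.symm
    · refine ⟨hz1 ▸ ih.1, ?_⟩
      intro h0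
      rw [h0, pWr_zero_right] at heq
      exact (mul_ne_zero hT1 (pow_ne_zero 2 ih.1)) heq.symm


lemma walk {T0 T1 S0 S1 p0 p1 y0 y1 : ℂ[X]} (a : ℂ)
    (hT0 : T0 ≠ 0) (hT1 : T1 ≠ 0) (hS0 : S0 ≠ 0) (hS1 : S1 ≠ 0)
    (hsf : SuperFertile (S0,S1) (p0,p1))
    (iden0 : (rootMultiplicity a S0 : ℤ) + 2*(rootMultiplicity a y0 : ℤ)
        + 2*(rootMultiplicity a p1 : ℤ)
      = (rootMultiplicity a T0 : ℤ) + 2*(rootMultiplicity a p0 : ℤ)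
        + 2*(rootMultiplicity a y1 : ℤ))
    (iden1 : (rootMultiplicity a S1 : ℤ) + 2*(rootMultiplicity a y1 : ℤ)
        + 2*(rootMultiplicity a p0 : ℤ)
      = (rootMultiplicity a T1 : ℤ) + 2*(rootMultiplicity a p1 : ℤ)
        + 2*(rootMultiplicity a y0 : ℤ))
    {w : ℂ[X] × ℂ[X]} (hch : Relation.ReflTransGen (Reprod (T0,T1)) w (y0,y1))
    (hw1 : w.1 ≠ 0) (hw2 : w.2 ≠ 0) :
    ∃ P0 P1 : ℂ[X], Relation.ReflTransGen (Reprod (S0,S1)) (p0,p1) (P0,P1) ∧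
      (rootMultiplicity a P0 : ℤ) + (rootMultiplicity a y0 : ℤ)
        = (rootMultiplicity a w.1 : ℤ) + (rootMultiplicity a p0 : ℤ) ∧
      (rootMultiplicity a P1 : ℤ) + (rootMultiplicity a y1 : ℤ)
        = (rootMultiplicity a w.2 : ℤ) + (rootMultiplicity a p1 : ℤ) := by
  revert hw1 hw2
  induction hch using Relation.ReflTransGen.head_induction_on with
  | refl =>
    intro h1 h2
    have e1 : ((y0,y1) : ℂ[X] × ℂ[X]).1 = y0 := rfl
    have e2 : ((y0,y1) : ℂ[X] × ℂ[X]).2 = y1 := rfl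
    rw [e1, e2]
    exact ⟨p0, p1, Relation.ReflTransGen.refl, by ring, by ring⟩
  | @head w c h' hrest ih =>
    intro h1 h2
    rcases h' with ⟨hc2, heq⟩ | ⟨hc1, heq⟩
    · -- direction 0 : c.2 = w.2, pWr w.1 c.1 = T0 * w.2 ^ 2
      have heq : pWr w.1 c.1 = T0 * w.2 ^ 2 := heq
      have hG : T0 * w.2^2 ≠ 0 := mul_ne_zero hT0 (pow_ne_zero _ h2)
      have hc1 : c.1 ≠ 0 := by
        intro h0; rw [h0, pWr_zero_right] at heq; exact hG heq.symm
      have hcc2 : c.2 ≠ 0 := by rw [hc2]; exact h2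
      obtain ⟨P0, P1, hre, e0, e1⟩ := ih hc1 hcc2
      rw [hc2] at e1
      by_cases hrm : rootMultiplicity a c.1 = rootMultiplicity a w.1
      · rw [hrm] at e0
        exact ⟨P0, P1, hre, e0, e1⟩
      · have hL := (rm_pWr a h1 hc1 (Ne.symm hrm)).2
        rw [heq] at hL
        have hrmG := rm_mul_sq a hT0 h2
        obtain ⟨P0', hre', hval⟩ := step_dir0 a hS0 hsf hre
        exact ⟨P0', P1, hre', by omega, e1⟩
    · -- direction 1
      have heq : pWr w.2 c.2 = T1 * w.1 ^ 2 := heq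
      have hG : T1 * w.1^2 ≠ 0 := mul_ne_zero hT1 (pow_ne_zero _ h1)
      have hc2' : c.2 ≠ 0 := by
        intro h0; rw [h0, pWr_zero_right] at heq; exact hG heq.symm
      have hcc1 : c.1 ≠ 0 := by rw [hc1]; exact h1
      obtain ⟨P0, P1, hre, e0, e1⟩ := ih hcc1 hc2'
      rw [hc1] at e0
      by_cases hrm : rootMultiplicity a c.2 = rootMultiplicity a w.2
      · rw [hrm] at e1
        exact ⟨P0, P1, hre, e0, e1⟩
      · have hL := (rm_pWr a h2 hc2' (Ne.symm hrm)).2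
        rw [heq] at hL
        have hrmG := rm_mul_sq a hT1 h1
        obtain ⟨P1', hre', hval⟩ := step_dir1 a hS1 hsf hre
        exact ⟨P0, P1', hre', e0, by omega⟩

lemma rm_le_one_of_squarefree {g : ℂ[X]} (hg : Squarefree g) (a : ℂ) :
    rootMultiplicity a g ≤ 1 := by
  by_contra hcon
  push_neg at hcon
  have hdvd : (X - C a)^2 ∣ g := (le_rootMultiplicity_iff hg.ne_zero).1 hcon
  exact not_isUnit_X_sub_C a (hg _ (by rwa [← pow_two]))

lemma dvd_of_rm_pos {f : ℂ[X]} (a : ℂ) (hf : rootMultiplicity a f ≠ 0) :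
    (X - C a) ∣ f := by
  have hf0 : f ≠ 0 := by
    intro h0; rw [h0, rootMultiplicity_zero] at hf; exact hf rfl
  have h1 : 1 ≤ rootMultiplicity a f := Nat.one_le_iff_ne_zero.2 hf
  have := (le_rootMultiplicity_iff hf0).1 h1
  rwa [pow_one] at this

lemma rm_coprime {f g : ℂ[X]} (h : IsCoprime f g) (a : ℂ)
    (hf : rootMultiplicity a f ≠ 0) : rootMultiplicity a g = 0 := by
  by_contra hg
  exact not_isUnit_X_sub_C a (h.isUnit_of_dvd' (dvd_of_rm_pos a hf) (dvd_of_rm_pos a hg))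

lemma dvd_of_rm_le {y p : ℂ[X]} (hy : y ≠ 0) (hp : p ≠ 0)
    (h : ∀ a : ℂ, rootMultiplicity a y ≤ rootMultiplicity a p) : y ∣ p := by
  classical
  have hsp : Splits y := IsAlgClosed.splits y
  have hy' : y = C y.leadingCoeff * (Multiset.map (fun a => X - C a) y.roots).prod :=
    hsp.eq_prod_roots
  have hle : y.roots ≤ p.roots := by
    rw [Multiset.le_iff_count]
    intro a
    rw [count_roots, count_roots]
    exact h a
  have hdvd1 : (Multiset.map (fun a => X - C a) y.roots).prod
      ∣ (Multiset.map (fun a => X - C a) p.roots).prod :=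
    Multiset.prod_dvd_prod_of_le (Multiset.map_le_map hle)
  have hdvd2 : (Multiset.map (fun a => X - C a) p.roots).prod ∣ p :=
    prod_multiset_X_sub_C_dvd p
  have hu : IsUnit (C y.leadingCoeff) :=
    isUnit_C.2 (IsUnit.mk0 _ (leadingCoeff_ne_zero.2 hy))
  rw [hy', mul_comm]
  exact (hu.mul_right_dvd).2 (hdvd1.trans hdvd2)


lemma rm_sq (a : ℂ) {B : ℂ[X]} (hB : B ≠ 0) :
    rootMultiplicity a (B^2) = 2 * rootMultiplicity a B := by
  rw [pow_two, rootMultiplicity_mul (mul_ne_zero hB hB)]; ring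

lemma rm_mul_sq_sq (a : ℂ) {A B Cp : ℂ[X]} (hA : A ≠ 0) (hB : B ≠ 0) (hC : Cp ≠ 0) :
    rootMultiplicity a (A * (B^2 * Cp^2))
      = rootMultiplicity a A + (2*rootMultiplicity a B + 2*rootMultiplicity a Cp) := by
  have h2 : (B^2 * Cp^2) ≠ 0 := mul_ne_zero (pow_ne_zero _ hB) (pow_ne_zero _ hC)
  rw [rootMultiplicity_mul (mul_ne_zero hA h2), rootMultiplicity_mul h2, rm_sq a hB, rm_sq a hC]

lemma main_poly {T0 T1 S0 S1 p0 p1 y0 y1 : ℂ[X]} (hT0 : T0 ≠ 0) (hT1 : T1 ≠ 0)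
    (hy0 : y0 ≠ 0) (hy1 : y1 ≠ 0) (hp0 : p0 ≠ 0) (hp1 : p1 ≠ 0)
    (hpop : InPopulation (T0,T1) (y0,y1))
    (hE0 : S0 * (y0^2 * p1^2) = T0 * (p0^2 * y1^2))
    (hE1 : S1 * (y1^2 * p0^2) = T1 * (p1^2 * y0^2))
    (hsf : SuperFertile (S0,S1) (p0,p1)) :
    y0 ∣ p0 ∧ y1 ∣ p1 := by
  have hS0 : S0 ≠ 0 := by
    intro h0; rw [h0, zero_mul] at hE0
    exact (mul_ne_zero hT0 (mul_ne_zero (pow_ne_zero _ hp0) (pow_ne_zero _ hy1))) hE0.symm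
  have hS1 : S1 ≠ 0 := by
    intro h0; rw [h0, zero_mul] at hE1
    exact (mul_ne_zero hT1 (mul_ne_zero (pow_ne_zero _ hp1) (pow_ne_zero _ hy0))) hE1.symm
  obtain ⟨ystart, ⟨hgen, hfert⟩, hchain⟩ := hpop
  obtain ⟨hsq0, hsq1, hcp, hcpT0, hcpT1⟩ := hgen
  have hcpT0 : IsCoprime ystart.1 T0 := hcpT0
  have hcpT1 : IsCoprime ystart.2 T1 := hcpT1
  have hg1 : ystart.1 ≠ 0 := hfert.1
  have hg2 : ystart.2 ≠ 0 := hfert.2.1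
  have key : ∀ a : ℂ, rootMultiplicity a y0 ≤ rootMultiplicity a p0 ∧
      rootMultiplicity a y1 ≤ rootMultiplicity a p1 := by
    intro a
    have hL0 := congrArg (rootMultiplicity a) hE0
    rw [rm_mul_sq_sq a hS0 hy0 hp1, rm_mul_sq_sq a hT0 hp0 hy1] at hL0
    have hL1 := congrArg (rootMultiplicity a) hE1
    rw [rm_mul_sq_sq a hS1 hy1 hp0, rm_mul_sq_sq a hT1 hp1 hy0] at hL1
    have iden0 : (rootMultiplicity a S0 : ℤ) + 2*(rootMultiplicity a y0 : ℤ)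
        + 2*(rootMultiplicity a p1 : ℤ)
      = (rootMultiplicity a T0 : ℤ) + 2*(rootMultiplicity a p0 : ℤ)
        + 2*(rootMultiplicity a y1 : ℤ) := by omega
    have iden1 : (rootMultiplicity a S1 : ℤ) + 2*(rootMultiplicity a y1 : ℤ)
        + 2*(rootMultiplicity a p0 : ℤ)
      = (rootMultiplicity a T1 : ℤ) + 2*(rootMultiplicity a p1 : ℤ)
        + 2*(rootMultiplicity a y0 : ℤ) := by omega
    obtain ⟨P0, P1, hre, e0, e1⟩ :=
      walk a hT0 hT1 hS0 hS1 hsf iden0 iden1 hchain hg1 hg2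
    constructor
    · by_cases hz : rootMultiplicity a ystart.1 = 0
      · omega
      · have h1' : rootMultiplicity a ystart.1 = 1 :=
          le_antisymm (rm_le_one_of_squarefree hsq0 a) (Nat.one_le_iff_ne_zero.2 hz)
        have hz1 : rootMultiplicity a ystart.2 = 0 := rm_coprime hcp a hz
        have ht0 : rootMultiplicity a T0 = 0 := rm_coprime hcpT0 a hz
        obtain ⟨P0', hre', hval⟩ := step_dir0 a hS0 hsf hre
        omega
    · by_cases hz : rootMultiplicity a ystart.2 = 0
      · omega
      · have h1' : rootMultiplicity a ystart.2 = 1 :=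
          le_antisymm (rm_le_one_of_squarefree hsq1 a) (Nat.one_le_iff_ne_zero.2 hz)
        have hz0 : rootMultiplicity a ystart.1 = 0 := rm_coprime hcp.symm a hz
        have ht1 : rootMultiplicity a T1 = 0 := rm_coprime hcpT1 a hz
        obtain ⟨P1', hre', hval⟩ := step_dir1 a hS1 hsf hre
        omega
  exact ⟨dvd_of_rm_le hy0 hp0 (fun a => (key a).1),
    dvd_of_rm_le hy1 hp1 (fun a => (key a).2)⟩


theorem superfertile_divisor_polynomial' (T0 T1 y0 y1 : ℂ[X])
    (hT0 : T0 ≠ 0) (hT1 : T1 ≠ 0)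
    (hpop : InPopulation (T0, T1) (y0, y1))
    (f0 f1 : RatFunc ℂ) (hf0 : f0 ≠ 0) (hf1 : f1 ≠ 0)
    (p0 p1 S0 S1 : ℂ[X])
    (hp0 : algebraMap ℂ[X] (RatFunc ℂ) p0 = f0 * algebraMap ℂ[X] (RatFunc ℂ) y0)
    (hp1 : algebraMap ℂ[X] (RatFunc ℂ) p1 = f1 * algebraMap ℂ[X] (RatFunc ℂ) y1)
    (hS0 : algebraMap ℂ[X] (RatFunc ℂ) S0 =
      algebraMap ℂ[X] (RatFunc ℂ) T0 * f0 ^ 2 / f1 ^ 2)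
    (hS1 : algebraMap ℂ[X] (RatFunc ℂ) S1 =
      algebraMap ℂ[X] (RatFunc ℂ) T1 * f1 ^ 2 / f0 ^ 2)
    (hsf : SuperFertile (S0, S1) (p0, p1)) :
    (∃ g0 : ℂ[X], f0 = algebraMap ℂ[X] (RatFunc ℂ) g0) ∧
    (∃ g1 : ℂ[X], f1 = algebraMap ℂ[X] (RatFunc ℂ) g1) := by
  classical
  obtain ⟨ystart, hcrit, hchain⟩ := hpop
  have hg1 : ystart.1 ≠ 0 := hcrit.2.1
  have hg2 : ystart.2 ≠ 0 := hcrit.2.2.1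
  obtain ⟨hy0, hy1⟩ := chain_ne_zero hT0 hT1 hchain hg1 hg2
  have hy0 : y0 ≠ 0 := hy0
  have hy1 : y1 ≠ 0 := hy1
  have hAy0 : algebraMap ℂ[X] (RatFunc ℂ) y0 ≠ 0 := RatFunc.algebraMap_ne_zero hy0
  have hAy1 : algebraMap ℂ[X] (RatFunc ℂ) y1 ≠ 0 := RatFunc.algebraMap_ne_zero hy1
  have hp0' : p0 ≠ 0 := by
    intro h0
    rw [h0, map_zero] at hp0
    exact (mul_ne_zero hf0 hAy0) hp0.symm
  have hp1' : p1 ≠ 0 := by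
    intro h0
    rw [h0, map_zero] at hp1
    exact (mul_ne_zero hf1 hAy1) hp1.symm
  have hinj := IsFractionRing.injective ℂ[X] (RatFunc ℂ)
  have hE0 : S0 * (y0^2 * p1^2) = T0 * (p0^2 * y1^2) := by
    apply hinj
    rw [map_mul, map_mul, map_pow, map_pow, map_mul, map_mul, map_pow, map_pow,
      hS0, hp0, hp1]
    field_simp
  have hE1 : S1 * (y1^2 * p0^2) = T1 * (p1^2 * y0^2) := by
    apply hinj
    rw [map_mul, map_mul, map_pow, map_pow, map_mul, map_mul, map_pow, map_pow,
      hS1, hp0, hp1]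
    field_simp
  obtain ⟨hd0, hd1⟩ := main_poly hT0 hT1 hy0 hy1 hp0' hp1'
    ⟨ystart, hcrit, hchain⟩ hE0 hE1 hsf
  constructor
  · obtain ⟨g0, hg0⟩ := hd0
    refine ⟨g0, ?_⟩
    have h := hp0
    rw [hg0, map_mul] at h
    have h2 : algebraMap ℂ[X] (RatFunc ℂ) g0 * algebraMap ℂ[X] (RatFunc ℂ) y0
        = f0 * algebraMap ℂ[X] (RatFunc ℂ) y0 := by rw [← h]; ring
    exact (mul_right_cancel₀ hAy0 h2).symm
  · obtain ⟨g1, hg1'⟩ := hd1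
    refine ⟨g1, ?_⟩
    have h := hp1
    rw [hg1', map_mul] at h
    have h2 : algebraMap ℂ[X] (RatFunc ℂ) g1 * algebraMap ℂ[X] (RatFunc ℂ) y1
        = f1 * algebraMap ℂ[X] (RatFunc ℂ) y1 := by rw [← h]; ring
    exact (mul_right_cancel₀ hAy1 h2).symm

end SFAux

/-- If multiplying a point of a population by rational functions `f₀, f₁` (so that the
products and the modified `T`'s are polynomials) produces a super-fertile pair, then
`f₀` and `f₁` are polynomials. -/
theorem superfertile_divisor_polynomial (T0 T1 y0 y1 : ℂ[X])
    (hT0 : T0 ≠ 0) (hT1 : T1 ≠ 0)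
    (hpop : InPopulation (T0, T1) (y0, y1))
    (f0 f1 : RatFunc ℂ) (hf0 : f0 ≠ 0) (hf1 : f1 ≠ 0)
    (p0 p1 S0 S1 : ℂ[X])
    (hp0 : algebraMap ℂ[X] (RatFunc ℂ) p0 = f0 * algebraMap ℂ[X] (RatFunc ℂ) y0)
    (hp1 : algebraMap ℂ[X] (RatFunc ℂ) p1 = f1 * algebraMap ℂ[X] (RatFunc ℂ) y1)
    (hS0 : algebraMap ℂ[X] (RatFunc ℂ) S0 =
      algebraMap ℂ[X] (RatFunc ℂ) T0 * f0 ^ 2 / f1 ^ 2)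
    (hS1 : algebraMap ℂ[X] (RatFunc ℂ) S1 =
      algebraMap ℂ[X] (RatFunc ℂ) T1 * f1 ^ 2 / f0 ^ 2)
    (hsf : SuperFertile (S0, S1) (p0, p1)) :
    (∃ g0 : ℂ[X], f0 = algebraMap ℂ[X] (RatFunc ℂ) g0) ∧
    (∃ g1 : ℂ[X], f1 = algebraMap ℂ[X] (RatFunc ℂ) g1) := by
  exact SFAux.superfertile_divisor_polynomial' T0 T1 y0 y1 hT0 hT1 hpop
    f0 f1 hf0 hf1 p0 p1 S0 S1 hp0 hp1 hS0 hS1 hsf
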